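/- For integers n ≥ 1 and k ≥ 0: ∫₀¹ t^{n−1} ln^k(1−t) dt = (−1)^k Y_k(n)/n, where Y_k(n) is the complete Bell polynomial evaluated at (H_n, 1!·H_n^{(2)}, 2!·H_n^{(3)}, …, (k−1)!·H_n^{(k)}). In particular Y₀(n)=1, Y₁(n)=H_n, Y₂(n)=H_n²+H_n^{(2)}, Y₃(n)=H_n³+3H_n H_n^{(2)}+2H_n^{(3)}. -/

import Mathlib

open Real Filter

/-- Generalized harmonic number `H_n^(m) = ∑_{j=1}^n 1/j^m`. -/
noncomputable def H (m n : ℕ) : ℝ := ∑ j ∈ Finset.range n, 1 / ((j : ℝ) + 1) ^ m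

/-- Riemann zeta value `ζ(r) = ∑_{n=1}^∞ 1/n^r`. -/
noncomputable def zt (r : ℕ) : ℝ := ∑' n : ℕ, 1 / ((n : ℝ) + 1) ^ r

/-- Polylogarithm `Li_p(x)`, with `Li_1(x) = -log(1-x)`. -/
noncomputable def Li (p : ℕ) (x : ℝ) : ℝ :=
  if p = 1 then -Real.log (1 - x) else ∑' n : ℕ, x ^ (n + 1) / ((n : ℝ) + 1) ^ p

/-- Complete exponential Bell polynomial `Y_k(x₁, x₂, …)`. -/
noncomputable def bellY : ℕ → (ℕ → ℝ) → ℝ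
  | 0, _ => 1
  | (n + 1), x =>
      ∑ i ∈ Finset.range (n + 1), (n.choose i : ℝ) * x (i + 1) * bellY (n - i) x
  decreasing_by exact Nat.lt_succ_of_le (Nat.sub_le n i)

/-- `Y_k(n)`: complete Bell polynomial at `(H_n, 1! H_n^(2), …, (r-1)! H_n^(r), …)`. -/
noncomputable def Y (k n : ℕ) : ℝ := bellY k (fun r => ((r - 1).factorial : ℝ) * H r n)

open MeasureTheory intervalIntegral Set

noncomputable def ch : ℕ → ℕ → ℝ
  | 0, _ => 1
  | _+1, 0 => 0
  | k+1, n+1 => ch (k+1) n + ch k (n+1) / (n+1)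
  termination_by k n => (k, n)

@[simp] lemma ch_zero (n : ℕ) : ch 0 n = 1 := by cases n <;> simp [ch]

@[simp] lemma ch_succ_zero (k : ℕ) : ch (k+1) 0 = 0 := by simp [ch]

lemma ch_rec (k n : ℕ) : ch (k+1) (n+1) = ch (k+1) n + ch k (n+1) / (n+1) := by
  rw [ch]

lemma ch_one_right (k : ℕ) : ch k 1 = 1 := by
  induction k with
  | zero => simp
  | succ k ih => rw [ch_rec, ch_succ_zero, ih]; norm_num

lemma H_succ (m n : ℕ) : H m (n+1) = H m n + (1/((n:ℝ)+1))^(m) := by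
  rw [H, Finset.sum_range_succ, ← H]
  push_cast; ring

lemma ch_one_left (n : ℕ) : ch 1 n = H 1 n := by
  induction n with
  | zero => simp [H]
  | succ n ih =>
    rw [ch_rec, ih, ch_zero, H_succ]
    push_cast; ring

lemma newton (n k : ℕ) :
    ∑ i ∈ Finset.range (k+1), H (i+1) n * ch (k-i) n = (k+1) * ch (k+1) n := by
  induction n generalizing k with
  | zero =>
    have : ∀ m : ℕ, H m 0 = 0 := fun m => by simp [H]
    simp [this]
  | succ n ihn =>
    induction k with
    | zero => simp [ch_one_left, H]
    | succ k ihk =>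
      set a : ℝ := 1/((n:ℝ)+1) with ha
      have split : ∑ i ∈ Finset.range (k+2), H (i+1) (n+1) * ch (k+1-i) (n+1)
          = (∑ i ∈ Finset.range (k+2), H (i+1) n * ch (k+1-i) (n+1))
            + ∑ i ∈ Finset.range (k+2), a^(i+1) * ch (k+1-i) (n+1) := by
        rw [← Finset.sum_add_distrib]
        exact Finset.sum_congr rfl fun i _ => by rw [H_succ]; ring
      have hA : ∑ i ∈ Finset.range (k+2), H (i+1) n * ch (k+1-i) (n+1)
          = (∑ i ∈ Finset.range (k+2), H (i+1) n * ch (k+1-i) n)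
            + a * ∑ i ∈ Finset.range (k+1), H (i+1) n * ch (k-i) (n+1) := by
        rw [Finset.sum_range_succ (n := k+1),
          Finset.sum_range_succ (f := fun i => H (i+1) n * ch (k+1-i) n) (n := k+1)]
        have key : ∀ i ∈ Finset.range (k+1),
            H (i+1) n * ch (k+1-i) (n+1)
              = H (i+1) n * ch (k+1-i) n + a * (H (i+1) n * ch (k-i) (n+1)) := by
          intro i hi
          have hik : i ≤ k := Nat.lt_succ_iff.mp (Finset.mem_range.mp hi)
          have h1 : k + 1 - i = (k - i) + 1 := by omega
          rw [h1, ch_rec]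
          push_cast [ha]
          ring
        rw [Finset.sum_congr rfl key, Finset.sum_add_distrib, ← Finset.mul_sum]
        have h2 : ch (k+1-(k+1)) (n+1) = ch (k+1-(k+1)) n := by simp
        rw [h2]; ring
      have hB : ∑ i ∈ Finset.range (k+2), a^(i+1) * ch (k+1-i) (n+1)
          = a * ch (k+1) (n+1) + a * ∑ i ∈ Finset.range (k+1), a^(i+1) * ch (k-i) (n+1) := by
        rw [Finset.sum_range_succ' (fun i => a^(i+1) * ch (k+1-i) (n+1)) (k+1)]
        have key : ∀ i ∈ Finset.range (k+1),
            a^(i+1+1) * ch (k+1-(i+1)) (n+1) = a * (a^(i+1) * ch (k-i) (n+1)) := by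
          intro i _
          have h1 : k+1-(i+1) = k - i := by omega
          rw [h1]; ring
        rw [Finset.sum_congr rfl key, ← Finset.mul_sum]
        simp only [Nat.sub_zero, pow_one]
        ring
      have hA' : ∑ i ∈ Finset.range (k+1), H (i+1) n * ch (k-i) (n+1)
          = (k+1) * ch (k+1) (n+1) - ∑ i ∈ Finset.range (k+1), a^(i+1) * ch (k-i) (n+1) := by
        rw [← ihk, ← Finset.sum_sub_distrib]
        refine (Finset.sum_congr rfl fun i _ => ?_).symm
        rw [H_succ]; push_cast [ha]; ring
      rw [split, hA, hA', hB, ihn (k+1), ch_rec (k+1) n]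
      push_cast [ha]
      ring

lemma Y_eq_ch (k n : ℕ) : Y k n = (k.factorial : ℝ) * ch k n := by
  induction k using Nat.strong_induction_on with
  | _ k ih =>
    match k with
    | 0 => simp [Y, bellY]
    | k+1 =>
      rw [Y, bellY]
      simp only [Nat.add_sub_cancel]
      have key : ∀ i ∈ Finset.range (k+1),
          (k.choose i : ℝ) * ((i.factorial : ℝ) * H (i+1) n)
              * bellY (k-i) (fun r => ((r - 1).factorial : ℝ) * H r n)
            = (k.factorial : ℝ) * (H (i+1) n * ch (k-i) n) := by
        intro i hi
        have hik : i ≤ k := Nat.lt_succ_iff.mp (Finset.mem_range.mp hi)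
        have hY : bellY (k-i) (fun r => ((r - 1).factorial : ℝ) * H r n)
            = ((k-i).factorial : ℝ) * ch (k-i) n := ih (k-i) (by omega)
        rw [hY]
        have hfac : (k.choose i : ℝ) * (i.factorial : ℝ) * ((k-i).factorial : ℝ)
            = (k.factorial : ℝ) := by
          rw [← Nat.cast_mul, ← Nat.cast_mul, Nat.choose_mul_factorial_mul_factorial hik]
        calc (k.choose i : ℝ) * ((i.factorial : ℝ) * H (i+1) n)
              * (((k-i).factorial : ℝ) * ch (k-i) n)
            = ((k.choose i : ℝ) * (i.factorial : ℝ) * ((k-i).factorial : ℝ))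
              * (H (i+1) n * ch (k-i) n) := by ring
          _ = _ := by rw [hfac]
      rw [Finset.sum_congr rfl key, ← Finset.mul_sum, newton, Nat.factorial_succ]
      push_cast
      ring

lemma intInt (m k : ℕ) :
    IntervalIntegrable (fun t : ℝ => t ^ m * (Real.log (1 - t)) ^ k) volume 0 1 := by
  rcases Nat.eq_zero_or_pos k with rfl | hk
  · simpa using intervalIntegral.intervalIntegrable_pow m (a := (0:ℝ)) (b := 1) (μ := volume)
  have hmeas : AEStronglyMeasurable (fun t : ℝ => t ^ m * (Real.log (1 - t)) ^ k)
      (volume.restrict (Ioc (0:ℝ) 1)) := by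
    apply Measurable.aestronglyMeasurable
    exact (measurable_id.pow_const m).mul
      ((Real.measurable_log.comp (measurable_const.sub measurable_id)).pow_const k)
  have hg : IntervalIntegrable (fun t : ℝ => ((2*k : ℝ))^k * (1 - t) ^ (-(1/2) : ℝ))
      volume 0 1 := by
    have h0 : IntervalIntegrable (fun t : ℝ => t ^ (-(1/2) : ℝ)) volume 0 1 :=
      intervalIntegral.intervalIntegrable_rpow' (by norm_num)
    have h1 := h0.comp_sub_left 1
    simp only [sub_zero, sub_self] at h1
    exact h1.symm.const_mul _
  rw [intervalIntegrable_iff_integrableOn_Ioc_of_le (by norm_num)]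
  rw [intervalIntegrable_iff_integrableOn_Ioc_of_le (by norm_num)] at hg
  apply hg.mono' hmeas
  rw [ae_restrict_iff' measurableSet_Ioc]
  refine ae_of_all _ fun t ht => ?_
  obtain ⟨ht0, ht1⟩ := ht
  rw [Real.norm_eq_abs]
  rcases eq_or_lt_of_le ht1 with rfl | ht1'
  · simp [Real.log_zero, zero_pow hk.ne', Real.zero_rpow (by norm_num : (-(1/2):ℝ) ≠ 0)]
  · have hu : (0:ℝ) < 1 - t := by linarith
    have habs : |t ^ m * Real.log (1 - t) ^ k| ≤ |Real.log (1 - t)| ^ k := by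
      rw [abs_mul, abs_pow, abs_pow]
      have h1 : |t| ^ m ≤ 1 := pow_le_one₀ (abs_nonneg t) (by rw [abs_of_pos ht0]; linarith)
      nlinarith [pow_nonneg (abs_nonneg (Real.log (1-t))) k, pow_nonneg (abs_nonneg t) m]
    have hlog : |Real.log (1 - t)| ≤ (2*k : ℝ) * (1 - t) ^ (-(1/(2*(k:ℝ)))) := by
      have h2k : (0:ℝ) < 1/(2*(k:ℝ)) := by positivity
      have hd := Real.log_le_rpow_div (x := (1-t)⁻¹) (by positivity) h2k
      rw [Real.log_inv] at hd
      have habs2 : |Real.log (1 - t)| = -Real.log (1 - t) :=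
        abs_of_nonpos (Real.log_nonpos (by linarith) (by linarith))
      rw [habs2]
      calc -Real.log (1-t) ≤ ((1-t)⁻¹) ^ ((1:ℝ)/(2*(k:ℝ))) / (1/(2*(k:ℝ))) := hd
        _ = (2*k : ℝ) * (1 - t) ^ (-(1/(2*(k:ℝ)))) := by
            rw [Real.inv_rpow hu.le, ← Real.rpow_neg hu.le, one_div, div_inv_eq_mul, mul_comm]
    calc |t ^ m * Real.log (1 - t) ^ k| ≤ |Real.log (1 - t)| ^ k := habs
      _ ≤ ((2*k : ℝ) * (1 - t) ^ (-(1/(2*(k:ℝ)))))^k := by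
          exact pow_le_pow_left₀ (abs_nonneg _) hlog k
      _ = ((2*k : ℝ))^k * (1 - t) ^ (-(1/2) : ℝ) := by
          rw [mul_pow, ← Real.rpow_natCast ((1-t) ^ (-(1/(2*(k:ℝ))))) k,
            ← Real.rpow_mul hu.le]
          congr 2
          field_simp

lemma contF (n k : ℕ) :
    ContinuousOn (fun t : ℝ => t^n * (1 - t) * (Real.log (1-t))^(k+1)) (Icc 0 1) := by
  intro x hx
  rcases eq_or_lt_of_le hx.2 with rfl | hx1
  · rw [← continuousWithinAt_diff_self]
    have hsub : Tendsto (fun t : ℝ => 1 - t) (nhdsWithin 1 (Icc (0:ℝ) 1 \ {1})) (nhdsWithin 0 (Ioi 0)) := by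
      apply tendsto_nhdsWithin_of_tendsto_nhds_of_eventually_within
      · have hc : Continuous fun t : ℝ => 1 - t := continuous_const.sub continuous_id
        have h0 := hc.tendsto 1
        norm_num at h0
        exact h0.mono_left nhdsWithin_le_nhds
      · filter_upwards [self_mem_nhdsWithin] with t ht
        have h1 : t ≤ 1 := ht.1.2
        have h2 : t ≠ 1 := by simpa using ht.2
        have : t < 1 := lt_of_le_of_ne h1 h2
        simpa using this
    have hphi : Tendsto (fun u : ℝ => u * (Real.log u)^(k+1)) (nhdsWithin 0 (Ioi 0)) (nhds 0) := by
      have h := (tendsto_log_mul_rpow_nhdsGT_zero (r := 1/((k:ℝ)+1)) (by positivity)).pow (k+1)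
      rw [zero_pow (Nat.succ_ne_zero k)] at h
      refine h.congr' ?_
      filter_upwards [self_mem_nhdsWithin] with u hu
      have hu' : (0:ℝ) < u := hu
      rw [mul_pow, ← Real.rpow_natCast (u ^ ((1:ℝ)/((k:ℝ)+1))) (k+1), ← Real.rpow_mul hu'.le]
      have : (1:ℝ)/((k:ℝ)+1) * ((k:ℕ)+1 : ℕ) = 1 := by push_cast; field_simp
      rw [this, Real.rpow_one]
      ring
    have htn : Tendsto (fun t : ℝ => t^n) (nhdsWithin 1 (Icc (0:ℝ) 1 \ {1})) (nhds 1) := by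
      simpa using ((continuous_pow n).tendsto (1:ℝ)).mono_left nhdsWithin_le_nhds
    have total := htn.mul (hphi.comp hsub)
    have : ContinuousWithinAt (fun t : ℝ => t^n * (1 - t) * (Real.log (1-t))^(k+1))
        (Icc (0:ℝ) 1 \ {1}) 1 := by
      unfold ContinuousWithinAt
      simp only [sub_self, Real.log_zero, zero_pow (Nat.succ_ne_zero k), mul_zero, one_pow]
      simpa [mul_assoc, Function.comp] using total
    exact this
  · apply ContinuousAt.continuousWithinAt
    have h1 : ContinuousAt (fun t : ℝ => Real.log (1-t)) x :=
      (Real.continuousAt_log (by linarith : (1:ℝ)-x ≠ 0)).comp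
        ((continuous_const.sub continuous_id).continuousAt)
    exact ((continuous_pow n).continuousAt.mul
      (continuous_const.sub continuous_id).continuousAt).mul (h1.pow _)

lemma derivF (n k : ℕ) {t : ℝ} (ht : t ∈ Ioo (0:ℝ) 1) :
    HasDerivAt (fun t : ℝ => t^n * (1 - t) * (Real.log (1-t))^(k+1))
      ((n:ℝ) * (t^(n-1) * (Real.log (1-t))^(k+1))
        - ((n:ℝ)+1) * (t^n * (Real.log (1-t))^(k+1))
        - ((k:ℝ)+1) * (t^n * (Real.log (1-t))^k)) t := by
  have ht1 : (1:ℝ) - t ≠ 0 := by have := ht.2; intro hh; linarith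
  have h1 : HasDerivAt (fun t:ℝ => t^n) ((n:ℝ)*t^(n-1)) t := hasDerivAt_pow n t
  have h2 : HasDerivAt (fun t:ℝ => 1 - t) (-1) t := (hasDerivAt_id t).const_sub 1
  have h3 : HasDerivAt (fun t:ℝ => Real.log (1-t)) ((1-t)⁻¹ * (-1)) t :=
    (Real.hasDerivAt_log ht1).comp t h2
  have h4 := h3.pow (k+1)
  simp only [Nat.add_sub_cancel] at h4
  have h5 := (h1.mul h2).mul h4
  refine HasDerivAt.congr_deriv h5 ?_
  simp only [Pi.mul_apply, Pi.pow_apply]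
  rcases n with _ | m
  · push_cast
    norm_num
    field_simp
    ring
  · simp only [Nat.add_sub_cancel]
    push_cast
    field_simp
    ring

lemma ibp (n k : ℕ) :
    (n:ℝ) * (∫ t in (0:ℝ)..1, t^(n-1) * (Real.log (1-t))^(k+1))
      = ((n:ℝ)+1) * (∫ t in (0:ℝ)..1, t^n * (Real.log (1-t))^(k+1))
        + ((k:ℝ)+1) * (∫ t in (0:ℝ)..1, t^n * (Real.log (1-t))^k) := by
  have iA : IntervalIntegrable
      (fun t : ℝ => (n:ℝ) * (t^(n-1) * (Real.log (1-t))^(k+1))) volume 0 1 :=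
    (intInt (n-1) (k+1)).const_mul _
  have iB : IntervalIntegrable
      (fun t : ℝ => ((n:ℝ)+1) * (t^n * (Real.log (1-t))^(k+1))) volume 0 1 :=
    (intInt n (k+1)).const_mul _
  have iC : IntervalIntegrable
      (fun t : ℝ => ((k:ℝ)+1) * (t^n * (Real.log (1-t))^k)) volume 0 1 :=
    (intInt n k).const_mul _
  have key := integral_eq_sub_of_hasDerivAt_of_le (by norm_num : (0:ℝ) ≤ 1)
    (contF n k) (fun x hx => derivF n k hx) (((iA.sub iB).sub iC))
  rw [integral_sub (iA.sub iB) iC, integral_sub iA iB,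
    intervalIntegral.integral_const_mul, intervalIntegral.integral_const_mul, intervalIntegral.integral_const_mul] at key
  have hb : (1:ℝ)^n * (1 - 1) * (Real.log (1-1))^(k+1)
      - (0:ℝ)^n * (1 - 0) * (Real.log (1-0))^(k+1) = 0 := by
    norm_num
  rw [hb] at key
  linarith

lemma main (k n : ℕ) : ((n:ℝ)+1) * (∫ t in (0:ℝ)..1, t^n * (Real.log (1-t))^k)
    = (-1:ℝ)^k * (k.factorial : ℝ) * ch k (n+1) := by
  induction k generalizing n with
  | zero =>
    simp only [pow_zero, mul_one, Nat.factorial_zero, Nat.cast_one, one_mul, ch_zero]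
    rw [integral_pow]
    have : ((n:ℝ)+1) ≠ 0 := by positivity
    push_cast
    field_simp
    simp
  | succ k ihk =>
    induction n with
    | zero =>
      have h := ibp 0 k
      have h2 := ihk 0
      norm_num [ch_one_right] at h h2 ⊢
      push_cast [Nat.factorial_succ] at h h2 ⊢
      linear_combination -h - ((k:ℝ)+1) * h2
    | succ n ihn =>
      have h := ibp (n+1) k
      simp only [Nat.add_sub_cancel] at h
      have h3 := ihk (n+1)
      have hch : ((n:ℝ)+2) * ch (k+1) (n+2) = ((n:ℝ)+2) * ch (k+1) (n+1) + ch k (n+2) := by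
        rw [ch_rec k (n+1)]
        push_cast
        have : ((n:ℝ)+1+1) ≠ 0 := by positivity
        field_simp
        ring
      have e2 : n+1+1 = n+2 := rfl
      rw [e2] at h3 ⊢
      push_cast [Nat.factorial_succ] at h h3 ihn ⊢
      have hn2 : ((n:ℝ)+2) ≠ 0 := by positivity
      apply mul_left_cancel₀ hn2
      linear_combination (-((n:ℝ)+2)) * h + ((n:ℝ)+2) * ihn - ((k:ℝ)+1) * h3
        + ((-1:ℝ))^k * (((k:ℝ)+1) * (k.factorial : ℝ)) * hch

theorem stmt10 (n k : ℕ) (hn : 1 ≤ n) :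
    ∫ t in (0 : ℝ)..1, t ^ (n - 1) * (Real.log (1 - t)) ^ k
      = (-1 : ℝ) ^ k * Y k n / n := by
  obtain ⟨m, rfl⟩ : ∃ m, n = m + 1 := ⟨n - 1, by omega⟩
  simp only [Nat.add_sub_cancel]
  have hm := main k m
  rw [Y_eq_ch]
  have h1 : ((m:ℝ)+1) ≠ 0 := by positivity
  rw [eq_div_iff (by push_cast; exact h1)]
  push_cast
  linear_combination hm
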